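/- Let A and B be n×n positive semidefinite complex matrices. Then Tr((A^(1/2) − B^(1/2))²) ≤ Tr(|A − B|); equivalently, 2·Tr(A^(1/2) · B^(1/2)) ≥ Tr(A + B − |A − B|). -/

import Mathlib

open Matrix
open scoped ComplexOrder

/-- Real power `A ^ r` of a Hermitian matrix, defined via the functional calculus:
apply `t ↦ t ^ r` (real power, with `0 ^ 0 = 1`) to the eigenvalues in a spectral
decomposition. -/
noncomputable def hermPow {n : ℕ} {A : Matrix (Fin n) (Fin n) ℂ}
    (hA : A.IsHermitian) (r : ℝ) : Matrix (Fin n) (Fin n) ℂ :=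
  hA.cfc (fun x : ℝ => x ^ r)

/-- The positive semidefinite square root of a positive semidefinite matrix
(the definition Mathlib had in December 2024; it has since been removed). -/
noncomputable def Matrix.PosSemidef.sqrt {n : Type*} [Fintype n] [DecidableEq n]
    {𝕜 : Type*} [RCLike 𝕜] {A : Matrix n n 𝕜} (hA : A.PosSemidef) : Matrix n n 𝕜 :=
  hA.1.eigenvectorUnitary.1 * diagonal ((↑) ∘ (√·) ∘ hA.1.eigenvalues) *
  (star hA.1.eigenvectorUnitary : Matrix n n 𝕜)

/-- The absolute value `|H|` of a Hermitian matrix: the positive semidefinite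
square root of `H ^ 2`. -/
noncomputable def hermAbs {n : ℕ} {H : Matrix (Fin n) (Fin n) ℂ}
    (hH : H.IsHermitian) : Matrix (Fin n) (Fin n) ℂ :=
  Matrix.PosSemidef.sqrt (A := H * H)
    (by simpa only [hH.eq] using Matrix.posSemidef_conjTranspose_mul_self H)

/-- The positive part `H₊ = (|H| + H) / 2` of a Hermitian matrix. -/
noncomputable def hermPosPart {n : ℕ} {H : Matrix (Fin n) (Fin n) ℂ}
    (hH : H.IsHermitian) : Matrix (Fin n) (Fin n) ℂ :=
  (2 : ℂ)⁻¹ • (hermAbs hH + H)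

/-- The negative part `H₋ = (|H| - H) / 2` of a Hermitian matrix. -/
noncomputable def hermNegPart {n : ℕ} {H : Matrix (Fin n) (Fin n) ℂ}
    (hH : H.IsHermitian) : Matrix (Fin n) (Fin n) ℂ :=
  (2 : ℂ)⁻¹ • (hermAbs hH - H)

namespace Matrix.PosSemidef

lemma sqrt_eq_cfc' {n : ℕ} {A : Matrix (Fin n) (Fin n) ℂ} (hA : A.PosSemidef) :
    hA.sqrt = cfc Real.sqrt A := by
  rw [hA.1.cfc_eq, Matrix.IsHermitian.cfc, Unitary.conjStarAlgAut_apply]; rfl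

lemma posSemidef_sqrt {n : ℕ} {A : Matrix (Fin n) (Fin n) ℂ} (hA : A.PosSemidef) :
    hA.sqrt.PosSemidef := by
  unfold Matrix.PosSemidef.sqrt
  rw [Matrix.star_eq_conjTranspose]
  refine Matrix.PosSemidef.mul_mul_conjTranspose_same (Matrix.PosSemidef.diagonal ?_) _
  intro i
  simp [Real.sqrt_nonneg]

lemma sqrt_mul_self {n : ℕ} {A : Matrix (Fin n) (Fin n) ℂ} (hA : A.PosSemidef) :
    hA.sqrt * hA.sqrt = A := by
  rw [sqrt_eq_cfc', ← cfc_mul Real.sqrt Real.sqrt A]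
  conv_rhs => rw [← cfc_id' ℝ A hA.1]
  refine cfc_congr fun x hx => ?_
  rw [hA.1.spectrum_real_eq_range_eigenvalues] at hx
  obtain ⟨i, rfl⟩ := hx
  exact Real.mul_self_sqrt (hA.eigenvalues_nonneg i)

end Matrix.PosSemidef

namespace PSAux

variable {n : ℕ}

lemma contOn (M : Matrix (Fin n) (Fin n) ℂ) (f : ℝ → ℝ) :
    ContinuousOn f (spectrum ℝ M) :=
  (Matrix.finite_real_spectrum (A := M)).continuousOn f

lemma trace_nonneg {M : Matrix (Fin n) (Fin n) ℂ} (hM : M.PosSemidef) :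
    0 ≤ M.trace := by
  rw [Matrix.trace]
  refine Finset.sum_nonneg fun i _ => ?_
  exact hM.diag_nonneg

lemma trace_mul_nonneg {X Y : Matrix (Fin n) (Fin n) ℂ}
    (hX : X.PosSemidef) (hY : Y.PosSemidef) : 0 ≤ (X * Y).trace := by
  have h1 : (hX.sqrt * Y * hX.sqrtᴴ).PosSemidef := hY.mul_mul_conjTranspose_same _
  rw [hX.posSemidef_sqrt.1] at h1
  have h2 := trace_nonneg h1
  rw [Matrix.trace_mul_cycle] at h2
  rwa [hX.sqrt_mul_self] at h2

lemma cfc_posSemidef {M : Matrix (Fin n) (Fin n) ℂ} (hM : M.IsHermitian)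
    (f : ℝ → ℝ) (hf : ∀ x, 0 ≤ f x) : (cfc f M).PosSemidef := by
  rw [hM.cfc_eq, Matrix.IsHermitian.cfc, Unitary.conjStarAlgAut_apply, Matrix.star_eq_conjTranspose]
  refine Matrix.PosSemidef.mul_mul_conjTranspose_same (Matrix.PosSemidef.diagonal ?_) _
  intro i
  simpa using hf (hM.eigenvalues i)

lemma cfc_mul' {M : Matrix (Fin n) (Fin n) ℂ} (hM : M.IsHermitian)
    (f g h : ℝ → ℝ) (hfg : ∀ x, f x * g x = h x) :
    cfc f M * cfc g M = cfc h M := by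
  rw [← cfc_mul f g M (contOn M f) (contOn M g)]
  exact cfc_congr fun x _ => hfg x

end PSAux

/-- **Powers–Størmer inequality for matrices.** For positive semidefinite complex
matrices `A, B`, `Tr((A^(1/2) - B^(1/2))²) ≤ Tr(|A - B|)`; equivalently,
`2 Tr(A^(1/2) B^(1/2)) ≥ Tr(A + B - |A - B|)`. -/
theorem powers_stormer
    {n : ℕ} {A B : Matrix (Fin n) (Fin n) ℂ}
    (hA : A.PosSemidef) (hB : B.PosSemidef) :
    ((hA.sqrt - hB.sqrt) ^ 2).trace ≤ (hermAbs (hA.1.sub hB.1)).trace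
      ∧ (A + B - hermAbs (hA.1.sub hB.1)).trace ≤ 2 * (hA.sqrt * hB.sqrt).trace := by
  classical
  set S := hA.sqrt with hSdef
  set T := hB.sqrt with hTdef
  have hS : S.PosSemidef := hA.posSemidef_sqrt
  have hT : T.PosSemidef := hB.posSemidef_sqrt
  have hSS : S * S = A := hA.sqrt_mul_self
  have hTT : T * T = B := hB.sqrt_mul_self
  have hY : (S - T).IsHermitian := hS.1.sub hT.1
  have hYsa : IsSelfAdjoint (S - T) := hY
  have hH : (A - B).IsHermitian := hA.1.sub hB.1
  have hHsa : IsSelfAdjoint (A - B) := hH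
  -- scalar function identities
  have fpm : ∀ x : ℝ, max x 0 * max (-x) 0 = 0 := by
    intro x
    rcases le_total x 0 with h | h
    · simp [max_eq_right h]
    · simp [max_eq_right (neg_nonpos_of_nonneg h)]
  have fsub : ∀ x : ℝ, max x 0 - max (-x) 0 = x := by
    intro x
    rcases le_total x 0 with h | h
    · simp [max_eq_right h, max_eq_left (neg_nonneg_of_nonpos h)]
    · simp [max_eq_left h, max_eq_right (neg_nonpos_of_nonneg h)]
  have fadd : ∀ x : ℝ, max x 0 + max (-x) 0 = |x| := by
    intro x
    rcases le_total x 0 with h | h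
    · simp [max_eq_right h, max_eq_left (neg_nonneg_of_nonpos h), abs_of_nonpos h]
    · simp [max_eq_left h, max_eq_right (neg_nonpos_of_nonneg h), abs_of_nonneg h]
  have fxp : ∀ x : ℝ, x * max x 0 = max x 0 * max x 0 := by
    intro x
    rcases le_total x 0 with h | h
    · simp [max_eq_right h]
    · simp [max_eq_left h]
  have fxm : ∀ x : ℝ, x * max (-x) 0 = -(max (-x) 0 * max (-x) 0) := by
    intro x
    rcases le_total x 0 with h | h
    · rw [max_eq_left (neg_nonneg_of_nonpos h)]; ring
    · simp [max_eq_right (neg_nonpos_of_nonneg h)]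
  have fxu : ∀ x : ℝ, x * (if 0 ≤ x then (1:ℝ) else -1) = |x| := by
    intro x
    by_cases h : 0 ≤ x
    · simp [h, abs_of_nonneg h]
    · simp [h, abs_of_neg (lt_of_not_ge h)]
  -- the spectral pieces
  set P := cfc (fun x : ℝ => max x 0) (S - T) with hPdef
  set N := cfc (fun x : ℝ => max (-x) 0) (S - T) with hNdef
  set Uu := cfc (fun x : ℝ => if 0 ≤ x then (1:ℝ) else -1) (S - T) with hUdef
  set Yabs := cfc (fun x : ℝ => |x|) (S - T) with hYadef
  set HP := cfc (fun x : ℝ => max x 0) (A - B) with hHPdef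
  set HN := cfc (fun x : ℝ => max (-x) 0) (A - B) with hHNdef
  set Habs := cfc (fun x : ℝ => |x|) (A - B) with hHadef
  have hPsd : P.PosSemidef := PSAux.cfc_posSemidef hY _ fun x => le_max_right _ _
  have hNsd : N.PosSemidef := PSAux.cfc_posSemidef hY _ fun x => le_max_right _ _
  have hHPsd : HP.PosSemidef := PSAux.cfc_posSemidef hH _ fun x => le_max_right _ _
  have hHNsd : HN.PosSemidef := PSAux.cfc_posSemidef hH _ fun x => le_max_right _ _
  have hUsub : ((1 : Matrix (Fin n) (Fin n) ℂ) - Uu).PosSemidef := by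
    have e : (1 : Matrix (Fin n) (Fin n) ℂ) - Uu
        = cfc (fun x : ℝ => 1 - (if 0 ≤ x then (1:ℝ) else -1)) (S - T) := by
      rw [cfc_sub _ _ (S - T) (PSAux.contOn _ _) (PSAux.contOn _ _), cfc_const_one ℝ (S - T)]
    rw [e]
    refine PSAux.cfc_posSemidef hY _ fun x => ?_
    by_cases h : 0 ≤ x <;> simp [h] <;> norm_num
  have hUadd : ((1 : Matrix (Fin n) (Fin n) ℂ) + Uu).PosSemidef := by
    have e : (1 : Matrix (Fin n) (Fin n) ℂ) + Uu
        = cfc (fun x : ℝ => 1 + (if 0 ≤ x then (1:ℝ) else -1)) (S - T) := by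
      rw [cfc_add (S - T) _ _ (PSAux.contOn _ _) (PSAux.contOn _ _), cfc_const_one ℝ (S - T)]
    rw [e]
    refine PSAux.cfc_posSemidef hY _ fun x => ?_
    by_cases h : 0 ≤ x <;> simp [h] <;> norm_num
  -- matrix identities from functional calculus
  have mPN : P * N = 0 := by
    rw [PSAux.cfc_mul' hY _ _ (fun _ => (0:ℝ)) fpm, cfc_const_zero ℝ (S - T)]
  have mNP : N * P = 0 := by
    rw [PSAux.cfc_mul' hY _ _ (fun _ => (0:ℝ)) (fun x => by rw [mul_comm]; exact fpm x),
      cfc_const_zero ℝ (S - T)]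
  have mPsubN : P - N = S - T := by
    have h1 : cfc (fun x : ℝ => max x 0 - max (-x) 0) (S - T) = P - N :=
      cfc_sub _ _ (S - T) (PSAux.contOn _ _) (PSAux.contOn _ _)
    have h2 : cfc (fun x : ℝ => max x 0 - max (-x) 0) (S - T) = S - T := by
      rw [cfc_congr fun x _ => fsub x, cfc_id' ℝ (S - T)]
    rw [← h1, h2]
  have mPaddN : P + N = Yabs := by
    have h1 : cfc (fun x : ℝ => max x 0 + max (-x) 0) (S - T) = P + N :=
      cfc_add (S - T) _ _ (PSAux.contOn _ _) (PSAux.contOn _ _)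
    have h2 : cfc (fun x : ℝ => max x 0 + max (-x) 0) (S - T) = Yabs :=
      cfc_congr fun x _ => fadd x
    rw [← h1, h2]
  have mYP : (S - T) * P = P * P := by
    have h1 : cfc (fun x : ℝ => x) (S - T) * P = cfc (fun x : ℝ => x * max x 0) (S - T) :=
      PSAux.cfc_mul' hY _ _ _ fun x => rfl
    have h2 : P * P = cfc (fun x : ℝ => x * max x 0) (S - T) :=
      PSAux.cfc_mul' hY _ _ _ fun x => (fxp x).symm
    rw [cfc_id' ℝ (S - T)] at h1
    rw [h1, ← h2]
  have mYN : (S - T) * N = -(N * N) := by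
    have h1 : cfc (fun x : ℝ => x) (S - T) * N = cfc (fun x : ℝ => x * max (-x) 0) (S - T) :=
      PSAux.cfc_mul' hY _ _ _ fun x => rfl
    have h2 : N * N = cfc (fun x : ℝ => max (-x) 0 * max (-x) 0) (S - T) :=
      PSAux.cfc_mul' hY _ _ _ fun x => rfl
    have h3 : cfc (fun x : ℝ => x * max (-x) 0) (S - T)
        = -(cfc (fun x : ℝ => max (-x) 0 * max (-x) 0) (S - T)) := by
      rw [cfc_congr fun x _ => fxm x]
      exact cfc_neg _ (S - T)
    rw [cfc_id' ℝ (S - T)] at h1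
    rw [h1, h3, ← h2]
  have mYU : (S - T) * Uu = Yabs := by
    have h1 : cfc (fun x : ℝ => x) (S - T) * Uu
        = cfc (fun x : ℝ => x * (if 0 ≤ x then (1:ℝ) else -1)) (S - T) :=
      PSAux.cfc_mul' hY _ _ _ fun x => rfl
    rw [cfc_id' ℝ (S - T)] at h1
    rw [h1, cfc_congr fun x _ => fxu x]
  have mUY : Uu * (S - T) = Yabs := by
    have h1 : Uu * cfc (fun x : ℝ => x) (S - T)
        = cfc (fun x : ℝ => x * (if 0 ≤ x then (1:ℝ) else -1)) (S - T) :=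
      PSAux.cfc_mul' hY _ _ _ fun x => mul_comm _ _
    rw [cfc_id' ℝ (S - T)] at h1
    rw [h1, cfc_congr fun x _ => fxu x]
  have mHsub : HP - HN = A - B := by
    have h1 : cfc (fun x : ℝ => max x 0 - max (-x) 0) (A - B) = HP - HN :=
      cfc_sub _ _ (A - B) (PSAux.contOn _ _) (PSAux.contOn _ _)
    have h2 : cfc (fun x : ℝ => max x 0 - max (-x) 0) (A - B) = A - B := by
      rw [cfc_congr fun x _ => fsub x, cfc_id' ℝ (A - B)]
    rw [← h1, h2]
  have mHadd : HP + HN = Habs := by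
    have h1 : cfc (fun x : ℝ => max x 0 + max (-x) 0) (A - B) = HP + HN :=
      cfc_add (A - B) _ _ (PSAux.contOn _ _) (PSAux.contOn _ _)
    have h2 : cfc (fun x : ℝ => max x 0 + max (-x) 0) (A - B) = Habs :=
      cfc_congr fun x _ => fadd x
    rw [← h1, h2]
  -- hermAbs is given by the functional calculus
  have hHabssd : Habs.PosSemidef := PSAux.cfc_posSemidef hH _ fun x => abs_nonneg x
  have habs_eq : hermAbs (hA.1.sub hB.1) = Habs := by
    have hsq : Habs ^ 2 = (A - B) * (A - B) := by
      rw [pow_two, PSAux.cfc_mul' hH _ _ (fun x : ℝ => x * x) fun x => abs_mul_abs_self x]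
      rw [← PSAux.cfc_mul' hH (fun x : ℝ => x) (fun x : ℝ => x) _ fun x => rfl,
        cfc_id' ℝ (A - B)]
    have e : (A - B) * (A - B) = cfc (fun x : ℝ => x * x) (A - B) := by
      rw [← PSAux.cfc_mul' hH (fun x : ℝ => x) (fun x : ℝ => x) _ fun x => rfl,
        cfc_id' ℝ (A - B)]
    rw [hermAbs, Matrix.PosSemidef.sqrt_eq_cfc', e,
      ← cfc_comp Real.sqrt (fun x : ℝ => x * x) (A - B) hHsa]
    exact cfc_congr fun x _ => Real.sqrt_mul_self_eq_abs x
  -- trace positivity facts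
  have tS_N : 0 ≤ (S * N).trace := PSAux.trace_mul_nonneg hS hNsd
  have tT_P : 0 ≤ (T * P).trace := PSAux.trace_mul_nonneg hT hPsd
  -- step 1
  have step1 : ((S - T) * (S - T)).trace = (P * P).trace + (N * N).trace := by
    have e : (S - T) * (S - T) = P * P + N * N := by
      rw [← mPsubN]
      have h : (P - N) * (P - N) = P * P + N * N - (P * N + N * P) := by noncomm_ring
      rw [h, mPN, mNP]
      simp
    rw [e, Matrix.trace_add]
  -- step 2
  have step2 : (P * P).trace ≤ (S * P).trace := by
    have e : S * P = (S - T) * P + T * P := by noncomm_ring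
    calc (P * P).trace = ((S - T) * P).trace := by rw [mYP]
      _ ≤ ((S - T) * P).trace + (T * P).trace := le_add_of_nonneg_right tT_P
      _ = (S * P).trace := by rw [← Matrix.trace_add, ← e]
  -- step 3
  have step3 : (N * N).trace ≤ (T * N).trace := by
    have e : T * N = S * N - (S - T) * N := by noncomm_ring
    rw [mYN, sub_neg_eq_add] at e
    calc (N * N).trace ≤ (S * N).trace + (N * N).trace := le_add_of_nonneg_left tS_N
      _ = (T * N).trace := by rw [← Matrix.trace_add, ← e]
  -- step 4
  have step4 : (S * P).trace + (T * N).trace ≤ ((S + T) * Yabs).trace := by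
    have e : (S + T) * Yabs = (S * P + T * N) + (S * N + T * P) := by
      rw [← mPaddN]; noncomm_ring
    rw [e]
    simp only [Matrix.trace_add]
    exact le_add_of_nonneg_right (add_nonneg tS_N tT_P)
  -- step 5
  have step5 : ((S + T) * Yabs).trace = ((A - B) * Uu).trace := by
    have e1 : (S + T) * Yabs = ((S + T) * (S - T)) * Uu := by
      rw [← mYU, ← Matrix.mul_assoc]
    have e2 : (S + T) * Yabs = ((S + T) * Uu) * (S - T) := by
      rw [← mUY, ← Matrix.mul_assoc]
    have key : (S + T) * (S - T) + (S - T) * (S + T) = (A - B) + (A - B) := by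
      have h : (S + T) * (S - T) + (S - T) * (S + T) = (S * S - T * T) + (S * S - T * T) := by
        noncomm_ring
      rw [h, hSS, hTT]
    have sum2 : ((S + T) * Yabs).trace + ((S + T) * Yabs).trace
        = ((A - B) * Uu).trace + ((A - B) * Uu).trace := by
      nth_rewrite 1 [e1]
      nth_rewrite 1 [e2]
      rw [Matrix.trace_mul_comm ((S + T) * Uu) (S - T), ← Matrix.mul_assoc,
        ← Matrix.trace_add, ← Matrix.add_mul, key, Matrix.add_mul, Matrix.trace_add]
    have h2 : (2:ℂ) * ((S + T) * Yabs).trace = 2 * ((A - B) * Uu).trace := by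
      rw [two_mul, two_mul]; exact sum2
    exact mul_left_cancel₀ two_ne_zero h2
  -- step 6
  have step6 : ((A - B) * Uu).trace ≤ Habs.trace := by
    have h1 : 0 ≤ (HP * (1 - Uu)).trace := PSAux.trace_mul_nonneg hHPsd hUsub
    have h2 : 0 ≤ (HN * (1 + Uu)).trace := PSAux.trace_mul_nonneg hHNsd hUadd
    rw [Matrix.mul_sub, Matrix.mul_one, Matrix.trace_sub, sub_nonneg] at h1
    rw [Matrix.mul_add, Matrix.mul_one, Matrix.trace_add, ← sub_neg_eq_add, sub_nonneg] at h2
    have e : (A - B) * Uu = HP * Uu - HN * Uu := by rw [← mHsub, Matrix.sub_mul]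
    rw [e, Matrix.trace_sub, ← mHadd, Matrix.trace_add]
    calc (HP * Uu).trace - (HN * Uu).trace
        = (HP * Uu).trace + -((HN * Uu).trace) := sub_eq_add_neg _ _
      _ ≤ HP.trace + HN.trace := add_le_add h1 h2
  -- first goal
  have goal1 : ((S - T) ^ 2).trace ≤ Habs.trace := by
    calc ((S - T) ^ 2).trace = (P * P).trace + (N * N).trace := by rw [pow_two, step1]
      _ ≤ (S * P).trace + (T * N).trace := add_le_add step2 step3
      _ ≤ ((S + T) * Yabs).trace := step4
      _ = ((A - B) * Uu).trace := step5
      _ ≤ Habs.trace := step6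
  constructor
  · rw [habs_eq]; exact goal1
  · have e : (S - T) * (S - T) = (A + B) - (S * T + T * S) := by
      have h : (S - T) * (S - T) = (S * S + T * T) - (S * T + T * S) := by noncomm_ring
      rw [h, hSS, hTT]
    have tTS : (T * S).trace = (S * T).trace := Matrix.trace_mul_comm T S
    have g1 : (A + B).trace - ((S * T).trace + (S * T).trace) ≤ Habs.trace := by
      calc (A + B).trace - ((S * T).trace + (S * T).trace)
          = ((S - T) ^ 2).trace := by
            rw [pow_two, e, Matrix.trace_sub, Matrix.trace_add (R := ℂ) (A := S * T), tTS]
        _ ≤ Habs.trace := goal1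
    rw [habs_eq, Matrix.trace_sub, sub_le_iff_le_add]
    rw [sub_le_iff_le_add] at g1
    have hr : Habs.trace + ((S * T).trace + (S * T).trace)
        = 2 * (S * T).trace + Habs.trace := by ring
    rw [← hr]
    exact g1
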